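/- Let G be a finite simple graph, A ⊆ V(G), and H ⊆ V(G) an even set of G. Let S = H ∩ A and let S* ⊆ A satisfy: (i) for every vertex v ∉ A, |N(v) ∩ S| and |N(v) ∩ S*| have the same parity; and (ii) for every vertex v ∈ S*, |N(v) ∩ S*| is odd if and only if |N(v) ∩ (H \ A)| is odd. Then (H \ A) ∪ S* is an even set of G. -/

import Mathlib

/-- A set `S` of vertices of `G` is *even* if every vertex of `S` has an even number of
neighbors inside `S`. -/
def SimpleGraph.IsEvenSet {V : Type*} (G : SimpleGraph V) (S : Set V) : Prop :=
  ∀ v ∈ S, Even (S ∩ G.neighborSet v).ncard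

/-- Exchange lemma for even sets: if `H` is an even set, `S = H ∩ A`, and `S* ⊆ A` has the
same neighborhood modulo 2 as `S` outside `A` and satisfies the parity condition (ii) on
its own vertices, then `(H \ A) ∪ S*` is again an even set. -/
theorem stmt15 {V : Type*} [Fintype V] (G : SimpleGraph V) (A H : Set V)
    (hH : G.IsEvenSet H) (S Sstar : Set V) (hS : S = H ∩ A) (hSsub : Sstar ⊆ A)
    (hi : ∀ v ∉ A,
      (Odd ((G.neighborSet v) ∩ S).ncard ↔ Odd ((G.neighborSet v) ∩ Sstar).ncard))
    (hii : ∀ v ∈ Sstar,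
      (Odd ((G.neighborSet v) ∩ Sstar).ncard ↔ Odd ((G.neighborSet v) ∩ (H \ A)).ncard)) :
    G.IsEvenSet ((H \ A) ∪ Sstar) := by
  intro v hv
  have hfin : ∀ s : Set V, s.Finite := fun s => s.toFinite
  have hdisj2 : Disjoint ((H \ A) ∩ G.neighborSet v) (Sstar ∩ G.neighborSet v) := by
    rw [Set.disjoint_left]
    rintro x ⟨hx, -⟩ ⟨hx', -⟩
    exact hx.2 (hSsub hx')
  have hsplit : ((H \ A) ∪ Sstar) ∩ G.neighborSet v
      = ((H \ A) ∩ G.neighborSet v) ∪ (Sstar ∩ G.neighborSet v) :=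
    Set.union_inter_distrib_right ..
  rw [hsplit, Set.ncard_union_eq hdisj2 (hfin _) (hfin _), Nat.even_add]
  rcases hv with hv | hv
  · have h1 := hH v hv.1
    have hSdisj : Disjoint (S ∩ G.neighborSet v) ((H \ A) ∩ G.neighborSet v) := by
      subst hS
      rw [Set.disjoint_left]
      rintro x ⟨⟨-, hxA⟩, -⟩ ⟨⟨-, hxA'⟩, -⟩
      exact hxA' hxA
    have hHsplit : H ∩ G.neighborSet v
        = (S ∩ G.neighborSet v) ∪ ((H \ A) ∩ G.neighborSet v) := by
      subst hS
      ext x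
      simp only [Set.mem_inter_iff, Set.mem_union, Set.mem_diff]
      tauto
    rw [hHsplit, Set.ncard_union_eq hSdisj (hfin _) (hfin _), Nat.even_add] at h1
    have h2 := hi v hv.2
    rw [Set.inter_comm (G.neighborSet v), Set.inter_comm (G.neighborSet v),
      ← Nat.not_even_iff_odd, ← Nat.not_even_iff_odd] at h2
    tauto
  · have h2 := hii v hv
    rw [Set.inter_comm (G.neighborSet v), Set.inter_comm (G.neighborSet v),
      ← Nat.not_even_iff_odd, ← Nat.not_even_iff_odd] at h2
    tauto
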